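/- Let G be a finite abelian group with maol(G) = 3. Then G is isomorphic to the Klein four group (Z/2Z)². -/

import Mathlib

/-- `maol G` is the maximum length of an orbit of the natural action of `Aut(G)` on `G`. -/
noncomputable def maol (G : Type*) [Group G] : ℕ :=
  ⨆ g : G, Nat.card (MulAction.orbit (MulAut G) g)

section Aux

open MulAction

variable {G : Type*} [CommGroup G] [Finite G]

private lemma maol_orbit_inv_mem {g w : G} (hw : w ∈ orbit (MulAut G) g) :
    w⁻¹ ∈ orbit (MulAut G) g := by
  obtain ⟨ψ, rfl⟩ := hw
  exact ⟨(ψ : MulEquiv G G).trans (MulEquiv.inv G), rfl⟩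

private lemma maol_le (h : maol G = 3) (g : G) :
    Nat.card (orbit (MulAut G) g) ≤ 3 := by
  have hbdd : BddAbove (Set.range fun g : G => Nat.card (orbit (MulAut G) g)) :=
    (Set.finite_range _).bddAbove
  calc Nat.card (orbit (MulAut G) g)
      ≤ ⨆ g : G, Nat.card (orbit (MulAut G) g) := le_ciSup hbdd g
    _ = 3 := h

private lemma maol_exists (h : maol G = 3) :
    ∃ g : G, Nat.card (orbit (MulAut G) g) = 3 := by
  have : Nonempty G := ⟨1⟩
  have hbdd : BddAbove (Set.range fun g : G => Nat.card (orbit (MulAut G) g)) :=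
    (Set.finite_range _).bddAbove
  have hmem := Nat.sSup_mem (Set.range_nonempty
    (fun g : G => Nat.card (orbit (MulAut G) g))) hbdd
  rw [show sSup _ = maol G from rfl, h] at hmem
  obtain ⟨g, hg⟩ := hmem
  exact ⟨g, hg⟩

/-- Key: if `maol G = 3`, every automorphism sends any element of order > 2
to itself or its inverse. -/
private lemma maol_pm (h : maol G = 3) {u : G} (hu : u * u ≠ 1) (φ : MulAut G) :
    φ u = u ∨ φ u = u⁻¹ := by
  by_contra hc
  push_neg at hc
  obtain ⟨h1, h2⟩ := hc
  classical
  have hfin : Fintype G := Fintype.ofFinite G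
  -- four distinct elements of the orbit of u
  have d1 : u ≠ u⁻¹ := fun he => hu (mul_eq_one_iff_eq_inv.mpr he)
  have hphi : φ u * φ u ≠ 1 := by
    intro he
    exact hu (φ.injective (by rw [map_mul, map_one, he]))
  have d2 : φ u ≠ (φ u)⁻¹ := fun he => hphi (mul_eq_one_iff_eq_inv.mpr he)
  have d3 : (φ u)⁻¹ ≠ u := fun he => h2 (inv_eq_iff_eq_inv.mp he)
  have d4 : (φ u)⁻¹ ≠ u⁻¹ := fun he => h1 (inv_injective he)
  have hsub : ({u, u⁻¹, φ u, (φ u)⁻¹} : Finset G) ⊆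
      (orbit (MulAut G) u).toFinset := by
    simp only [Finset.insert_subset_iff, Finset.singleton_subset_iff,
      Set.mem_toFinset]
    exact ⟨mem_orbit_self u, maol_orbit_inv_mem (mem_orbit_self u),
      mem_orbit u φ, maol_orbit_inv_mem (mem_orbit u φ)⟩
  have m1 : u ∉ ({u⁻¹, φ u, (φ u)⁻¹} : Finset G) := by
    simp only [Finset.mem_insert, Finset.mem_singleton]
    push_neg
    exact ⟨d1, fun he => h1 he.symm, fun he => d3 he.symm⟩
  have m2 : u⁻¹ ∉ ({φ u, (φ u)⁻¹} : Finset G) := by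
    simp only [Finset.mem_insert, Finset.mem_singleton]
    push_neg
    exact ⟨fun he => h2 he.symm, fun he => d4 he.symm⟩
  have m3 : φ u ∉ ({(φ u)⁻¹} : Finset G) := by
    simpa using d2
  have hcard4 : ({u, u⁻¹, φ u, (φ u)⁻¹} : Finset G).card = 4 := by
    rw [Finset.card_insert_of_notMem m1, Finset.card_insert_of_notMem m2,
        Finset.card_insert_of_notMem m3, Finset.card_singleton]
  have hle3 := maol_le h u
  rw [Nat.card_eq_card_toFinset] at hle3
  have := Finset.card_le_card hsub
  omega

end Aux

theorem stmt_12 (G : Type*) [CommGroup G] [Finite G] (h : maol G = 3) :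
    Nonempty (G ≃* Multiplicative (ZMod 2 × ZMod 2)) := by
  classical
  open MulAction in
  -- Step 1: find an involution w ≠ 1 whose orbit has 3 elements.
  obtain ⟨g, hg⟩ := maol_exists h
  have hg' : (orbit (MulAut G) g).ncard = 3 := by
    rw [← Nat.card_coe_set_eq]; exact hg
  obtain ⟨x₀, y₀, z₀, hxy, hxz, hyz, hS⟩ := Set.ncard_eq_three.mp hg'
  -- there is a self-inverse element in the orbit
  have hinv : ∀ w ∈ orbit (MulAut G) g, w⁻¹ ∈ orbit (MulAut G) g :=
    fun w hw => maol_orbit_inv_mem hw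
  have hself : ∃ w ∈ orbit (MulAut G) g, w⁻¹ = w := by
    by_contra hno
    push_neg at hno
    have mem3 : ∀ t : G, t ∈ orbit (MulAut G) g → t = x₀ ∨ t = y₀ ∨ t = z₀ := by
      intro t ht; rw [hS] at ht; simpa using ht
    have hx0 : x₀ ∈ orbit (MulAut G) g := by rw [hS]; simp
    have hy0 : y₀ ∈ orbit (MulAut G) g := by rw [hS]; simp
    have hz0 : z₀ ∈ orbit (MulAut G) g := by rw [hS]; simp
    have hyne := hno y₀ hy0
    have hzne := hno z₀ hz0
    rcases mem3 _ (hinv x₀ hx0) with e | e | e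
    · exact hno x₀ hx0 e
    · have ey : y₀⁻¹ = x₀ := by rw [← e, inv_inv]
      rcases mem3 _ (hinv z₀ hz0) with f | f | f
      · exact hyz (by rw [← e, ← f, inv_inv])
      · exact hxz (by rw [← ey, ← f, inv_inv])
      · exact hzne f
    · rcases mem3 _ (hinv y₀ hy0) with f | f | f
      · have ez : z₀⁻¹ = x₀ := by rw [← e, inv_inv]
        exact hyz (inv_injective (f.trans ez.symm))
      · exact hyne f
      · exact hxy (inv_injective (e.trans f.symm))
  obtain ⟨w, hwmem, hwinv⟩ := hself
  have hw2 : w * w = 1 := mul_eq_one_iff_eq_inv.mpr hwinv.symm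
  have horb : orbit (MulAut G) w = orbit (MulAut G) g := orbit_eq_iff.mpr hwmem
  have hw1 : w ≠ 1 := by
    rintro rfl
    have h1g : g = 1 := by
      obtain ⟨ψ, hψ⟩ := hwmem
      exact ψ.injective (by rw [map_one]; exact hψ)
    rw [h1g] at hg'
    have : orbit (MulAut G) (1 : G) = {1} := by
      ext t
      constructor
      · rintro ⟨ψ, rfl⟩; simp [MulAut.smul_def]
      · rintro rfl; exact mem_orbit_self 1
    rw [this] at hg'
    simp at hg'
  have hworb : (orbit (MulAut G) w).ncard = 3 := by rw [horb]; exact hg'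
  -- two other elements a ≠ b in the orbit of w
  have hdiff : ((orbit (MulAut G) w) \ {w}).ncard = 2 := by
    rw [Set.ncard_diff_singleton_of_mem (mem_orbit_self w), hworb]
  obtain ⟨a, b, hab, hABset⟩ := Set.ncard_eq_two.mp hdiff
  have haw : a ∈ orbit (MulAut G) w ∧ a ≠ w := by
    have : a ∈ (orbit (MulAut G) w) \ {w} := by rw [hABset]; simp
    exact ⟨this.1, by simpa using this.2⟩
  have hbw : b ∈ orbit (MulAut G) w ∧ b ≠ w := by
    have : b ∈ (orbit (MulAut G) w) \ {w} := by rw [hABset]; simp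
    exact ⟨this.1, by simpa using this.2⟩
  -- Step 2: every element has order dividing 2
  have hexp : ∀ x : G, x * x = 1 := by
    intro x
    by_contra hx
    -- every element `c ≠ w` of the orbit of `w` equals `x^2 * w`
    have main : ∀ c : G, c ∈ orbit (MulAut G) w → c ≠ w → c = x * x * w := by
      intro c hc hcw
      obtain ⟨σ, rfl⟩ := hc
      simp only [MulAut.smul_def] at hcw ⊢
      have hy : (x * w) * (x * w) ≠ 1 := by
        intro he
        rw [mul_mul_mul_comm, hw2, mul_one] at he
        exact hx he
      have hσx := maol_pm h hx σ
      have hσy := maol_pm h hy σ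
      rw [map_mul] at hσy
      have hwinv' : w⁻¹ = w := hwinv
      rcases hσx with hσx | hσx <;> rcases hσy with hσy | hσy <;>
        rw [hσx] at hσy
      · -- x * σ w = x * w
        exact absurd (mul_left_cancel hσy) hcw
      · -- x * σ w = (x*w)⁻¹
        have ha' : σ w = x⁻¹ * x⁻¹ * w := by
          apply mul_left_cancel (a := x)
          rw [hσy, mul_inv_rev, hwinv']
          simp [mul_comm, mul_assoc, mul_left_comm]
        have hsw2 : σ w * σ w = 1 := by
          rw [← map_mul, hw2, map_one]
        rw [ha'] at hsw2
        have h4 : x⁻¹ * x⁻¹ * (x⁻¹ * x⁻¹) * (w * w) = 1 := by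
          rw [← hsw2]
          simp [mul_comm, mul_assoc, mul_left_comm]
        rw [hw2, mul_one] at h4
        have hx4 : x * x * (x * x) = 1 := by
          rw [← inv_eq_one, show (x * x * (x * x))⁻¹ = x⁻¹ * x⁻¹ * (x⁻¹ * x⁻¹) from by
            simp [mul_inv_rev, mul_comm, mul_assoc, mul_left_comm]]
          exact h4
        have hinv2 : x⁻¹ * x⁻¹ = x * x := by
          apply mul_left_cancel (a := x * x)
          rw [hx4]
          simp [mul_assoc]
        rw [ha', hinv2]
      · -- x⁻¹ * σ w = x * w
        apply mul_left_cancel (a := x⁻¹)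
        rw [hσy]
        simp [mul_assoc]
      · -- x⁻¹ * σ w = (x*w)⁻¹
        have hσw : σ w = w := by
          apply mul_left_cancel (a := x⁻¹)
          rw [hσy, mul_inv_rev, hwinv']
          exact mul_comm w x⁻¹
        exact absurd hσw hcw
    have ha := main a haw.1 haw.2
    have hb := main b hbw.1 hbw.2
    exact hab (ha.trans hb.symm)
  -- Step 3: G is a vector space over ZMod 2
  let V := Additive G
  letI : Module (ZMod 2) V := AddCommGroup.zmodModule (by
    intro v
    show (2 : ℕ) • v = 0
    rw [two_nsmul]
    exact hexp (Additive.toMul v))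
  haveI : FiniteDimensional (ZMod 2) V := Module.Finite.of_finite
  -- transitivity of linear automorphisms on nonzero vectors
  have trans : ∀ v u : V, v ≠ 0 → u ≠ 0 → ∃ e : V ≃ₗ[ZMod 2] V, e v = u := by
    intro v u hv hu
    obtain ⟨p, hp⟩ := (Submodule.span (ZMod 2) {v}).exists_isCompl
    obtain ⟨q, hq⟩ := (Submodule.span (ZMod 2) {u}).exists_isCompl
    have hfr : Module.finrank (ZMod 2) p = Module.finrank (ZMod 2) q := by
      have h1 := Submodule.finrank_add_eq_of_isCompl hp
      have h2 := Submodule.finrank_add_eq_of_isCompl hq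
      rw [finrank_span_singleton hv] at h1
      rw [finrank_span_singleton hu] at h2
      omega
    obtain ⟨ψ⟩ := FiniteDimensional.nonempty_linearEquiv_of_finrank_eq hfr
    let v' : ↥(Submodule.span (ZMod 2) ({v} : Set V)) :=
      ⟨v, Submodule.mem_span_singleton_self v⟩
    let u' : ↥(Submodule.span (ZMod 2) ({u} : Set V)) :=
      ⟨u, Submodule.mem_span_singleton_self u⟩
    let e₁ : (Submodule.span (ZMod 2) ({v} : Set V)) ≃ₗ[ZMod 2]
        (Submodule.span (ZMod 2) ({u} : Set V)) :=
      (LinearEquiv.toSpanNonzeroSingleton (ZMod 2) V v hv).symm.trans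
        (LinearEquiv.toSpanNonzeroSingleton (ZMod 2) V u hu)
    refine ⟨(Submodule.prodEquivOfIsCompl _ _ hp).symm.trans
      ((e₁.prodCongr ψ).trans (Submodule.prodEquivOfIsCompl _ _ hq)), ?_⟩
    have hv0 : (Submodule.prodEquivOfIsCompl (Submodule.span (ZMod 2) {v}) p hp).symm v =
        (v', (0 : p)) :=
      Submodule.prodEquivOfIsCompl_symm_apply_left _ _ hp v'
    have he₁ : e₁ v' = u' := by
      show (LinearEquiv.toSpanNonzeroSingleton (ZMod 2) V u hu)
        ((LinearEquiv.toSpanNonzeroSingleton (ZMod 2) V v hv).symm v') = _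
      rw [show v' = (LinearEquiv.toSpanNonzeroSingleton (ZMod 2) V v hv) 1 from
        (LinearEquiv.toSpanNonzeroSingleton_one (ZMod 2) V v hv).symm]
      rw [LinearEquiv.symm_apply_apply]
      exact LinearEquiv.toSpanNonzeroSingleton_one (ZMod 2) V u hu
    simp only [LinearEquiv.trans_apply, hv0, LinearEquiv.prodCongr_apply]
    rw [Submodule.coe_prodEquivOfIsCompl']
    simp [he₁, u']
  -- orbit of w is everything except 1
  have horbw : orbit (MulAut G) w = {t : G | t ≠ 1} := by
    ext t
    constructor
    · rintro ⟨ψ, rfl⟩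
      simp only [Set.mem_setOf_eq, MulAut.smul_def]
      intro he
      exact hw1 (ψ.injective (by simpa using he))
    · intro ht
      simp only [Set.mem_setOf_eq] at ht
      have hv : (Additive.ofMul w : V) ≠ 0 := fun he => hw1 (by
        simpa using congrArg Additive.toMul he)
      have hu : (Additive.ofMul t : V) ≠ 0 := fun he => ht (by
        simpa using congrArg Additive.toMul he)
      obtain ⟨e, he⟩ := trans _ _ hv hu
      refine ⟨MulEquiv.toAdditive.symm e.toAddEquiv, ?_⟩
      show Additive.toMul (e (Additive.ofMul w)) = t
      rw [he]
      rfl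
  -- card G = 4
  have hcard : Nat.card G = 4 := by
    have := Set.ncard_add_ncard_compl ({t : G | t ≠ 1}) (Set.toFinite _)
    have hcompl : ({t : G | t ≠ 1} : Set G)ᶜ = {1} := by
      ext t; simp [not_not]
    rw [hcompl, Set.ncard_singleton, ← horbw, hworb] at this
    omega
  -- finrank = 2
  haveI : Fintype G := Fintype.ofFinite G
  have hfr2 : Module.finrank (ZMod 2) V = 2 := by
    have hc : Fintype.card V = 2 ^ Module.finrank (ZMod 2) V := by
      have := Module.card_eq_pow_finrank (K := ZMod 2) (V := V)
      rwa [ZMod.card] at this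
    have hcV : Fintype.card V = 4 := by
      rw [← Nat.card_eq_fintype_card]
      exact hcard
    rw [hcV] at hc
    have : (2 : ℕ) ^ 2 = 2 ^ Module.finrank (ZMod 2) V := by omega
    exact (Nat.pow_right_injective (le_refl 2) this).symm
  have hfrP : Module.finrank (ZMod 2) (ZMod 2 × ZMod 2) = 2 := by
    simp [Module.finrank_prod]
  obtain ⟨e⟩ := FiniteDimensional.nonempty_linearEquiv_of_finrank_eq
    (hfr2.trans hfrP.symm)
  exact ⟨AddEquiv.toMultiplicativeRight e.toAddEquiv⟩
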